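/- For each t ∈ ℝ let u_t be the unitary operator on L²([−π, π]) given by multiplication by the function x ↦ e^{itx}. Then the family {u_t}_{t∈ℝ}, viewed as maps from the closed unit ball of L²([−π, π]) to itself, is NOT UEC for the weak uniformity. -/

import Mathlib

open scoped InnerProductSpace
open MeasureTheory Complex Real

/-- A family of maps `F k : H → H` (viewed as maps of the closed unit ball `H₁` to itself)
is *uniformly equicontinuous (UEC) for the weak uniformity* if for every `ε > 0` and all
vectors `x₁, …, x_N ∈ H₁` there exist `δ > 0` and vectors `w₁, …, w_M ∈ H₁` such that for
all `ξ, η ∈ H₁` with `|⟪ξ - η, w_j⟫| < δ` for all `j`, and every member of the family,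
`|⟪F k ξ - F k η, x_i⟫| < ε` for all `i`. -/
def UECweak {H : Type*} [NormedAddCommGroup H] [InnerProductSpace ℂ H]
    {ι : Type*} (F : ι → H → H) : Prop :=
  ∀ ε : ℝ, 0 < ε → ∀ (N : ℕ) (x : Fin N → H), (∀ i, ‖x i‖ ≤ 1) →
    ∃ (δ : ℝ) (M : ℕ) (w : Fin M → H), 0 < δ ∧ (∀ j, ‖w j‖ ≤ 1) ∧
      ∀ ξ η : H, ‖ξ‖ ≤ 1 → ‖η‖ ≤ 1 →
        (∀ j, ‖⟪ξ - η, w j⟫_ℂ‖ < δ) →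
        ∀ (k : ι) (i : Fin N), ‖⟪F k ξ - F k η, x i⟫_ℂ‖ < ε

/-- Lebesgue measure restricted to the interval `[-π, π]`. -/
noncomputable def muIcc : MeasureTheory.Measure ℝ :=
  MeasureTheory.volume.restrict (Set.Icc (-Real.pi) Real.pi)


instance : IsFiniteMeasure muIcc := by
  constructor
  simp [muIcc, Real.volume_Icc]

noncomputable def φ (n : ℕ) : ℝ → ℂ :=
  fun x => Complex.exp (Complex.I * n * x) / (Real.sqrt (2 * Real.pi) : ℂ)

lemma normφ (n : ℕ) (x : ℝ) : ‖φ n x‖ = (Real.sqrt (2 * Real.pi))⁻¹ := by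
  have h : (Complex.I * n * x).re = 0 := by simp
  simp [φ, norm_div, Complex.norm_exp, h, Real.norm_eq_abs,
    _root_.abs_of_nonneg (Real.sqrt_nonneg _), Complex.norm_real]

lemma memLp_φ (n : ℕ) : MemLp (φ n) 2 muIcc := by
  apply MemLp.of_bound (C := (Real.sqrt (2 * Real.pi))⁻¹)
  · exact (Continuous.div_const (by continuity) _).aestronglyMeasurable
  · filter_upwards with x
    rw [normφ]

noncomputable def e (n : ℕ) : Lp ℂ 2 muIcc := (memLp_φ n).toLp _

-- key integral
lemma integral_exp_int (k : ℤ) (hk : k ≠ 0) :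
    ∫ x : ℝ, Complex.exp (Complex.I * k * x) ∂muIcc = 0 := by
  have hpi : -Real.pi ≤ Real.pi := by linarith [Real.pi_pos]
  rw [muIcc, integral_Icc_eq_integral_Ioc, ← intervalIntegral.integral_of_le hpi]
  have hc : (Complex.I * k : ℂ) ≠ 0 := by
    simp [Complex.I_ne_zero, hk]
  have := integral_exp_mul_complex (a := -Real.pi) (b := Real.pi) hc
  simp only [mul_assoc] at this ⊢
  rw [this]
  have h1 : Complex.exp ((Complex.I * (k * Real.pi))) = Complex.cos (k * Real.pi) + Complex.sin (k * Real.pi) * Complex.I := by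
    rw [← Complex.exp_mul_I]; ring_nf
  have h2 : Complex.exp ((Complex.I * (k * (-Real.pi : ℝ)))) = Complex.cos (k * Real.pi) - Complex.sin (k * Real.pi) * Complex.I := by
    push_cast
    rw [show (Complex.I * (k * -(Real.pi:ℂ))) = -(k * Real.pi) * Complex.I by ring,
      Complex.exp_mul_I, Complex.cos_neg, Complex.sin_neg]
    ring
  rw [h1, h2, Complex.sin_int_mul_pi]
  simp

lemma coe_e (n : ℕ) : (e n : ℝ → ℂ) =ᵐ[muIcc] φ n := MemLp.coeFn_toLp _

lemma inner_e (m n : ℕ) :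
    ⟪e m, e n⟫_ℂ = (2 * Real.pi : ℂ)⁻¹ * ∫ x : ℝ,
      Complex.exp (Complex.I * ((n : ℤ) - (m : ℤ)) * x) ∂muIcc := by
  rw [MeasureTheory.L2.inner_def, ← MeasureTheory.integral_const_mul]
  apply integral_congr_ae
  filter_upwards [coe_e m, coe_e n] with x hm hn
  rw [hm, hn]
  simp only [RCLike.inner_apply, φ]
  have hs : ((Real.sqrt (2 * Real.pi) : ℂ)) * (Real.sqrt (2 * Real.pi) : ℂ) = (2 * Real.pi : ℂ) := by
    rw [← Complex.ofReal_mul, Real.mul_self_sqrt (by positivity)]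
    push_cast; ring
  rw [map_div₀, div_mul_div_comm, ← Complex.exp_conj]
  have hc : (starRingEnd ℂ) (Complex.I * m * x) = -(Complex.I * m * x) := by
    simp [Complex.conj_I]
  rw [hc, Complex.conj_ofReal, hs, ← Complex.exp_add]
  rw [div_eq_inv_mul]
  congr 2
  push_cast
  ring

lemma inner_e_self (n : ℕ) : ⟪e n, e n⟫_ℂ = 1 := by
  rw [inner_e]
  simp only [sub_self, Int.cast_zero, mul_zero, zero_mul, Complex.exp_zero]
  rw [MeasureTheory.integral_const]
  have hm : muIcc.real Set.univ = 2 * Real.pi := by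
    rw [muIcc, measureReal_def, Measure.restrict_apply_univ, Real.volume_Icc,
      ENNReal.toReal_ofReal (by linarith [Real.pi_pos])]
    ring
  rw [hm]
  have hpi : (2 * Real.pi : ℝ) ≠ 0 := by positivity
  rw [Complex.real_smul, mul_one]
  push_cast
  exact inv_mul_cancel₀ (mul_ne_zero two_ne_zero (Complex.ofReal_ne_zero.mpr Real.pi_ne_zero))

lemma norm_e (n : ℕ) : ‖e n‖ = 1 := by
  have h := @inner_self_eq_norm_sq ℂ _ _ _ _ (e n)
  rw [inner_e_self] at h
  norm_num at h
  nlinarith [norm_nonneg (e n)]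

lemma orthonormal_e : Orthonormal ℂ e := by
  rw [orthonormal_iff_ite]
  intro m n
  by_cases h : m = n
  · simp [h, inner_e_self, norm_e]
  · rw [if_neg h, inner_e]
    have hk : ((n : ℤ) - (m : ℤ)) ≠ 0 := by
      intro hh
      apply h
      omega
    have := integral_exp_int _ hk
    push_cast at this ⊢
    rw [this, mul_zero]

/-- For `t ∈ ℝ` let `u_t` be the unitary operator on `L²([-π, π])` given by multiplication
by the function `x ↦ exp(i t x)`.  Then the family `{u_t}_{t ∈ ℝ}`, viewed as maps of the
closed unit ball of `L²([-π, π])` to itself, is not UEC for the weak uniformity. -/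
theorem not_uecWeak_mulExp
    (u : ℝ → (MeasureTheory.Lp ℂ 2 muIcc →L[ℂ] MeasureTheory.Lp ℂ 2 muIcc))
    (hu : ∀ t : ℝ, u t ∈ unitary (MeasureTheory.Lp ℂ 2 muIcc →L[ℂ] MeasureTheory.Lp ℂ 2 muIcc))
    (hmul : ∀ t : ℝ, ∀ g : MeasureTheory.Lp ℂ 2 muIcc,
      (u t g : ℝ → ℂ) =ᵐ[muIcc] fun x : ℝ => Complex.exp (Complex.I * t * x) * g x) :
    ¬ UECweak (fun t : ℝ => fun g : MeasureTheory.Lp ℂ 2 muIcc => u t g) := by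
  intro h
  obtain ⟨δ, M, w, hδ, hw1, hcond⟩ := h (1/2) (by norm_num) 1 ![e 0]
    (by intro i; fin_cases i; simp [norm_e 0])
  -- for each j, the inner products ⟪e n, w j⟫ tend to 0 by Bessel's inequality
  have hlim : ∀ j, Filter.Tendsto (fun n => ‖⟪e n, w j⟫_ℂ‖) Filter.atTop (nhds 0) := by
    intro j
    have hs := orthonormal_e.inner_products_summable (x := w j)
    have h0 := hs.tendsto_atTop_zero
    have h1 := (Real.continuous_sqrt.tendsto 0).comp h0
    rw [Real.sqrt_zero] at h1
    convert h1 using 2 with n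
    simp [Function.comp, Real.sqrt_sq (norm_nonneg _)]
  have hev : ∀ᶠ n in Filter.atTop, ∀ j, ‖⟪e n, w j⟫_ℂ‖ < δ := by
    rw [Filter.eventually_all]
    intro j
    exact (hlim j).eventually_lt_const hδ
  obtain ⟨n, hn⟩ := hev.exists
  have key := hcond (e n) 0 (le_of_eq (norm_e n)) (by simp)
    (fun j => by simpa using hn j) (-(n : ℝ)) 0
  have heq : u (-(n : ℝ)) (e n) = e 0 := by
    apply MeasureTheory.Lp.ext
    filter_upwards [hmul (-(n : ℝ)) (e n), coe_e n, coe_e 0] with x h1 h2 h3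
    rw [h1, h2, h3]
    simp only [φ]
    rw [mul_div_assoc', ← Complex.exp_add]
    congr 1
    push_cast
    ring
  simp only [Matrix.cons_val_zero, map_zero, sub_zero, heq, inner_e_self] at key
  norm_num at key
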